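/- Let ζ₁, γ : [t₀,∞) → ℝ^N with γ = ζ̇₁ + c ζ₁ for a diagonal positive matrix c = diag{c_i}, and suppose γ̇ = −k_s γ − β sgn(ζ₁) + N_c(t) with N_c continuously differentiable, and N_c, Ṅ_c bounded. If β_i ≥ (max_j c_j / min_j c_j)·sup_t ‖N_c(t)‖₁ + (1/min_j c_j)·sup_t ‖Ṅ_c(t)‖₁ for all i, then the function V₃(t) = ζ₁(t₀)ᵀβ sgn(ζ₁(t₀)) − ζ₁(t₀)ᵀ N_c(t₀) − ∫_{t₀}^t γ(τ)ᵀ(N_c(τ) − β sgn(ζ₁(τ))) dτ is nonnegative for all t ≥ t₀. -/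

import Mathlib

open Finset

section RiseAuxProof
open Set MeasureTheory intervalIntegral Filter

lemma mul_sign_eq_abs (x : ℝ) : x * Real.sign x = |x| := by
  rcases lt_trichotomy x 0 with h|h|h
  · simp [Real.sign_of_neg h, abs_of_neg h]
  · simp [h]
  · simp [Real.sign_of_pos h, abs_of_pos h]

lemma signType_coe_eq (x : ℝ) : (SignType.sign x : ℝ) = Real.sign x := by
  rcases lt_trichotomy x 0 with h|h|h <;>
    simp [h, Real.sign_of_neg, Real.sign_of_pos, Real.sign_zero]

lemma abs_real_sign_le (x : ℝ) : |Real.sign x| ≤ 1 := by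
  rcases Real.sign_apply_eq x with h|h|h <;> simp [h]

lemma countable_of_forall_isolated {A : Set ℝ} (h : ∀ x ∈ A, ∀ᶠ z in nhdsWithin x {x}ᶜ, z ∉ A) :
    A.Countable := by
  haveI : DiscreteTopology A := by
    rw [discreteTopology_subtype_iff]
    intro x hx
    rw [Filter.inf_principal_eq_bot]
    exact h x hx
  haveI : Countable A := TopologicalSpace.separableSpace_iff_countable.mp inferInstance
  exact Set.countable_coe_iff.mpr this

lemma hasDerivWithinAt_abs_zero {f : ℝ → ℝ} {f' x : ℝ} (hf : HasDerivAt f f' x)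
    (hx : f x = 0) : HasDerivWithinAt (fun y => |f y|) |f'| (Set.Ioi x) x := by
  rw [hasDerivWithinAt_iff_isLittleO]
  have h := (hasDerivAt_iff_isLittleO.mp hf).mono
    (nhdsWithin_le_nhds (s := Set.Ioi x))
  rw [Asymptotics.isLittleO_iff] at h ⊢
  intro ε hε
  filter_upwards [h hε, self_mem_nhdsWithin] with y hy hy'
  have h1 : (0:ℝ) ≤ y - x := le_of_lt (sub_pos.mpr hy')
  simp only [hx, abs_zero, sub_zero, smul_eq_mul, Real.norm_eq_abs] at *
  calc |(|f y| - (y - x) * |f'|)| = |(|f y| - |(y - x) * f'|)| := by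
        rw [abs_mul, abs_of_nonneg h1]
    _ ≤ |f y - (y - x) * f'| := abs_abs_sub_abs_le_abs_sub _ _
    _ ≤ ε * |y - x| := hy

lemma integrableOn_of_bound {u uC : ℝ → ℝ} {a b : ℝ} (hab : a ≤ b) (hm : Measurable uC)
    (heq : ∀ᵐ τ ∂(volume.restrict (Set.Icc a b)), u τ = uC τ)
    {K : ℝ} (hb : ∀ τ ∈ Set.Icc a b, |u τ| ≤ K) : IntervalIntegrable u volume a b := by
  rw [intervalIntegrable_iff_integrableOn_Icc_of_le hab]
  have hmeas : AEStronglyMeasurable u (volume.restrict (Set.Icc a b)) :=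
    hm.aestronglyMeasurable.congr (Filter.EventuallyEq.symm heq)
  refine MeasureTheory.Integrable.mono' (g := fun _ => K)
    (MeasureTheory.integrableOn_const measure_Icc_lt_top.ne) hmeas ?_
  filter_upwards [MeasureTheory.ae_restrict_mem measurableSet_Icc] with τ hτ
  simpa [Real.norm_eq_abs] using hb τ hτ

theorem comp_aux (t₀ t : ℝ) (ht : t₀ ≤ t) (f γi g g' : ℝ → ℝ) (ci βi BN BD : ℝ)
    (hci : 0 < ci) (hβi : 0 < βi)
    (hf : ∀ τ, t₀ ≤ τ → HasDerivAt f (γi τ - ci * f τ) τ)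
    (hγcont : ∀ τ, t₀ ≤ τ → ContinuousAt γi τ)
    (hg : ∀ τ, t₀ ≤ τ → HasDerivAt g (g' τ) τ)
    (hgB : ∀ τ, t₀ ≤ τ → |g τ| ≤ BN) (hg'B : ∀ τ, t₀ ≤ τ → |g' τ| ≤ BD)
    (hβBN : BN ≤ βi) (hkey : ci * BN + BD ≤ βi * ci) :
    IntervalIntegrable (fun τ => γi τ * (g τ - βi * Real.sign (f τ))) volume t₀ t ∧
    0 ≤ f t₀ * (βi * Real.sign (f t₀)) - f t₀ * g t₀
        - ∫ τ in t₀..t, γi τ * (g τ - βi * Real.sign (f τ)) := by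
  -- continuity facts
  have hfct : ∀ τ, t₀ ≤ τ → ContinuousAt f τ := fun τ h => (hf τ h).continuousAt
  have hgct : ∀ τ, t₀ ≤ τ → ContinuousAt g τ := fun τ h => (hg τ h).continuousAt
  have hmax : Continuous (fun τ : ℝ => max τ t₀) := continuous_id.max continuous_const
  have hmax_ge : ∀ τ : ℝ, t₀ ≤ max τ t₀ := fun τ => le_max_right _ _
  have hmax_eq : ∀ τ, t₀ ≤ τ → max τ t₀ = τ := fun τ h => max_eq_left h
  -- clean global versions
  set fC : ℝ → ℝ := fun τ => f (max τ t₀) with hfCdef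
  set γC : ℝ → ℝ := fun τ => γi (max τ t₀) with hγCdef
  set gC : ℝ → ℝ := fun τ => g (max τ t₀) with hgCdef
  have hfCc : Continuous fC := by
    have : Continuous (f ∘ fun τ : ℝ => max τ t₀) :=
      continuous_iff_continuousAt.mpr fun τ => (hfct _ (hmax_ge τ)).comp (x := τ) hmax.continuousAt
    exact this
  have hγCc : Continuous γC := by
    have : Continuous (γi ∘ fun τ : ℝ => max τ t₀) :=
      continuous_iff_continuousAt.mpr fun τ => (hγcont _ (hmax_ge τ)).comp (x := τ) hmax.continuousAt
    exact this
  have hgCc : Continuous gC := by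
    have : Continuous (g ∘ fun τ : ℝ => max τ t₀) :=
      continuous_iff_continuousAt.mpr fun τ => (hgct _ (hmax_ge τ)).comp (x := τ) hmax.continuousAt
    exact this
  have hfCeq : ∀ τ, t₀ ≤ τ → fC τ = f τ := fun τ h => by simp [hfCdef, hmax_eq τ h]
  have hγCeq : ∀ τ, t₀ ≤ τ → γC τ = γi τ := fun τ h => by simp [hγCdef, hmax_eq τ h]
  have hgCeq : ∀ τ, t₀ ≤ τ → gC τ = g τ := fun τ h => by simp [hgCdef, hmax_eq τ h]
  -- bounds on the compact interval
  obtain ⟨Mf, hMf⟩ : ∃ M, ∀ τ ∈ Set.Icc t₀ t, |f τ| ≤ M := by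
    obtain ⟨M, hM⟩ := isCompact_Icc.exists_bound_of_continuousOn
      (hfCc.continuousOn.congr (fun τ hτ => (hfCeq τ hτ.1).symm))
    exact ⟨M, fun τ hτ => by simpa [Real.norm_eq_abs] using hM τ hτ⟩
  obtain ⟨Mγ, hMγ⟩ : ∃ M, ∀ τ ∈ Set.Icc t₀ t, |γi τ| ≤ M := by
    obtain ⟨M, hM⟩ := isCompact_Icc.exists_bound_of_continuousOn
      (hγCc.continuousOn.congr (fun τ hτ => (hγCeq τ hτ.1).symm))
    exact ⟨M, fun τ hτ => by simpa [Real.norm_eq_abs] using hM τ hτ⟩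
  obtain ⟨Mg, hMg⟩ : ∃ M, ∀ τ ∈ Set.Icc t₀ t, |g τ| ≤ M := by
    obtain ⟨M, hM⟩ := isCompact_Icc.exists_bound_of_continuousOn
      (hgCc.continuousOn.congr (fun τ hτ => (hgCeq τ hτ.1).symm))
    exact ⟨M, fun τ hτ => by simpa [Real.norm_eq_abs] using hM τ hτ⟩
  have ht₀mem : t₀ ∈ Set.Icc t₀ t := ⟨le_refl _, ht⟩
  have hMf0 : 0 ≤ Mf := le_trans (abs_nonneg _) (hMf t₀ ht₀mem)
  have hMγ0 : 0 ≤ Mγ := le_trans (abs_nonneg _) (hMγ t₀ ht₀mem)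
  have hMg0 : 0 ≤ Mg := le_trans (abs_nonneg _) (hMg t₀ ht₀mem)
  have hMfd : ∀ τ ∈ Set.Icc t₀ t, |γi τ - ci * f τ| ≤ Mγ + ci * Mf := by
    intro τ hτ
    calc |γi τ - ci * f τ| ≤ |γi τ| + |ci * f τ| := abs_sub _ _
      _ ≤ Mγ + ci * Mf := by
          rw [abs_mul, abs_of_pos hci]
          exact add_le_add (hMγ τ hτ) (mul_le_mul_of_nonneg_left (hMf τ hτ) hci.le)
  -- measurable sign surrogate
  set sgnC : ℝ → ℝ := fun τ =>
    Set.indicator {σ | 0 < fC σ} (fun _ => (1:ℝ)) τ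
      - Set.indicator {σ | fC σ < 0} (fun _ => (1:ℝ)) τ with hsgnCdef
  have hsgnCm : Measurable sgnC := by
    exact ((measurable_const.indicator (isOpen_lt continuous_const hfCc).measurableSet).sub
      (measurable_const.indicator (isOpen_lt hfCc continuous_const).measurableSet))
  have hsgnCeq : ∀ τ, sgnC τ = Real.sign (fC τ) := by
    intro τ
    rcases lt_trichotomy (fC τ) 0 with h|h|h
    · simp [hsgnCdef, Set.indicator_apply, h, not_lt.mpr h.le, Real.sign_of_neg h]
    · simp [hsgnCdef, Set.indicator_apply, h, Real.sign_zero]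
    · simp [hsgnCdef, Set.indicator_apply, h, not_lt.mpr h.le, Real.sign_of_pos h]
  have hBN0 : 0 ≤ BN := le_trans (abs_nonneg _) (hgB t₀ le_rfl)
  have hBD0 : 0 ≤ BD := le_trans (abs_nonneg _) (hg'B t₀ le_rfl)
  -- auxiliary functions
  set D : ℝ → ℝ := fun τ => Real.sign (f τ) * (γi τ - ci * f τ) +
      Set.indicator {σ | f σ = 0} (fun σ => |γi σ - ci * f σ|) τ with hDdef
  set H : ℝ → ℝ := fun τ => (γi τ - ci * f τ) * g τ + f τ * g' τ - βi * D τ with hHdef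
  set F : ℝ → ℝ := fun τ => f τ * g τ - βi * |f τ| with hFdef
  set gm : ℝ → ℝ := fun τ => γi τ * (g τ - βi * Real.sign (f τ)) with hgmdef
  set φ : ℝ → ℝ := fun τ => f τ * g' τ - ci * (f τ * g τ) + βi * ci * |f τ| with hφdef
  -- right derivative of F
  have hFderiv : ∀ x ∈ Set.Ioo t₀ t, HasDerivWithinAt F (H x) (Set.Ioi x) x := by
    intro x hx
    have hx0 : t₀ ≤ x := hx.1.le
    have hdf : HasDerivAt f (γi x - ci * f x) x := hf x hx0
    have hdg : HasDerivAt g (g' x) x := hg x hx0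
    have habs : HasDerivWithinAt (fun τ => |f τ|) (D x) (Set.Ioi x) x := by
      by_cases h0 : f x = 0
      · have hDx : D x = |γi x - ci * f x| := by
          simp [hDdef, h0, Real.sign_zero, Set.indicator_of_mem, Set.mem_setOf_eq]
        rw [hDx]
        exact hasDerivWithinAt_abs_zero hdf h0
      · have hDx : D x = Real.sign (f x) * (γi x - ci * f x) := by
          have : x ∉ {σ | f σ = 0} := h0
          simp [hDdef, Set.indicator_of_notMem this]
        rw [hDx, ← signType_coe_eq]
        exact ((hasDerivAt_abs h0).comp x hdf).hasDerivWithinAt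
    exact ((hdf.mul hdg).hasDerivWithinAt).sub (habs.const_mul βi)
  have hFcont : ContinuousOn F (Set.Icc t₀ t) := by
    intro τ hτ
    have h1 := hfct τ hτ.1
    have h2 := hgct τ hτ.1
    exact ((h1.mul h2).sub
      (continuousAt_const.mul (continuous_abs.continuousAt.comp (x := τ) h1))).continuousWithinAt
  -- a.e. facts
  have haeIcc : ∀ᵐ τ ∂(volume.restrict (Set.Icc t₀ t)), τ ∈ Set.Icc t₀ t :=
    ae_restrict_mem measurableSet_Icc
  have haet₀ : ∀ᵐ τ ∂(volume.restrict (Set.Icc t₀ t)), τ ≠ t₀ := by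
    apply MeasureTheory.ae_restrict_of_ae
    rw [MeasureTheory.ae_iff]
    simpa using measure_singleton (α := ℝ) t₀
  -- deriv of gC matches g' strictly above t₀
  have hderivgC : ∀ τ, t₀ < τ → deriv gC τ = g' τ := by
    intro τ hτ
    have hev : gC =ᶠ[nhds τ] g := by
      filter_upwards [Ioi_mem_nhds hτ] with s hs
      simp [hgCdef, hmax_eq s (le_of_lt hs)]
    exact ((hg τ hτ.le).congr_of_eventuallyEq hev).deriv
  -- measurable version of H
  set HC : ℝ → ℝ := fun τ => (γC τ - ci * fC τ) * gC τ + fC τ * deriv gC τ -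
      βi * (sgnC τ * (γC τ - ci * fC τ) +
        Set.indicator {σ | fC σ = 0} (fun σ => |γC σ - ci * fC σ|) τ) with hHCdef
  have hHCm : Measurable HC := by
    have h1 : Measurable fC := hfCc.measurable
    have h2 : Measurable γC := hγCc.measurable
    have h3 : Measurable gC := hgCc.measurable
    have h4 : Measurable (deriv gC) := measurable_deriv _
    have h5 : Measurable (fun τ => γC τ - ci * fC τ) := h2.sub (measurable_const.mul h1)
    have h6 : MeasurableSet {σ | fC σ = 0} := (isClosed_eq hfCc continuous_const).measurableSet
    exact ((h5.mul h3).add (h1.mul h4)).sub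
      (measurable_const.mul ((hsgnCm.mul h5).add (h5.abs.indicator h6)))
  have hHeq : ∀ᵐ τ ∂(volume.restrict (Set.Icc t₀ t)), H τ = HC τ := by
    filter_upwards [haeIcc, haet₀] with τ hτ hτ0
    have h1 : t₀ < τ := lt_of_le_of_ne hτ.1 (Ne.symm hτ0)
    have e1 := hfCeq τ hτ.1
    have e2 := hγCeq τ hτ.1
    have e3 := hgCeq τ hτ.1
    have e4 := hderivgC τ h1
    have e5 : sgnC τ = Real.sign (f τ) := by rw [hsgnCeq, e1]
    have e6 : Set.indicator {σ | fC σ = 0} (fun σ => |γC σ - ci * fC σ|) τ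
        = Set.indicator {σ | f σ = 0} (fun σ => |γi σ - ci * f σ|) τ := by
      by_cases h0 : f τ = 0
      · rw [Set.indicator_of_mem (by simp only [Set.mem_setOf_eq, e1]; exact h0),
          Set.indicator_of_mem (by simpa using h0), e1, e2]
      · rw [Set.indicator_of_notMem (by simp only [Set.mem_setOf_eq, e1]; exact h0),
          Set.indicator_of_notMem (by simpa using h0)]
    simp only [hHdef, hHCdef, hDdef, e1, e2, e3, e4, e5, e6]
  -- bound on D and H
  have hDbound : ∀ τ ∈ Set.Icc t₀ t, |D τ| ≤ 2 * (Mγ + ci * Mf) := by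
    intro τ hτ
    have h1 : |Real.sign (f τ) * (γi τ - ci * f τ)| ≤ Mγ + ci * Mf := by
      rw [abs_mul]
      calc |Real.sign (f τ)| * |γi τ - ci * f τ| ≤ 1 * |γi τ - ci * f τ| :=
            mul_le_mul_of_nonneg_right (abs_real_sign_le _) (abs_nonneg _)
        _ = |γi τ - ci * f τ| := one_mul _
        _ ≤ Mγ + ci * Mf := hMfd τ hτ
    have h2 : |Set.indicator {σ | f σ = 0} (fun σ => |γi σ - ci * f σ|) τ| ≤ Mγ + ci * Mf := by
      by_cases h0 : f τ = 0
      · rw [Set.indicator_of_mem (by simpa using h0), abs_abs]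
        exact hMfd τ hτ
      · rw [Set.indicator_of_notMem (by simpa using h0)]
        simpa using le_trans (abs_nonneg _) (hMfd τ hτ)
    calc |D τ| ≤ |Real.sign (f τ) * (γi τ - ci * f τ)| +
          |Set.indicator {σ | f σ = 0} (fun σ => |γi σ - ci * f σ|) τ| := abs_add_le _ _
      _ ≤ 2 * (Mγ + ci * Mf) := by linarith
  have hHbound : ∀ τ ∈ Set.Icc t₀ t,
      |H τ| ≤ (Mγ + ci * Mf) * Mg + Mf * BD + βi * (2 * (Mγ + ci * Mf)) := by
    intro τ hτ
    have h1 := hMfd τ hτ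
    have h2 := hMg τ hτ
    have h3 := hMf τ hτ
    have h4 := hg'B τ hτ.1
    have h5 := hDbound τ hτ
    have hb : |H τ| ≤ |γi τ - ci * f τ| * |g τ| + |f τ| * |g' τ| + βi * |D τ| := by
      calc |H τ| ≤ |(γi τ - ci * f τ) * g τ + f τ * g' τ| + |βi * D τ| := abs_sub _ _
        _ ≤ |(γi τ - ci * f τ) * g τ| + |f τ * g' τ| + |βi * D τ| := by
            have := abs_add_le ((γi τ - ci * f τ) * g τ) (f τ * g' τ)
            linarith
        _ = |γi τ - ci * f τ| * |g τ| + |f τ| * |g' τ| + βi * |D τ| := by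
            rw [abs_mul, abs_mul, abs_mul, abs_of_pos hβi]
    have hp1 : |γi τ - ci * f τ| * |g τ| ≤ (Mγ + ci * Mf) * Mg :=
      mul_le_mul h1 h2 (abs_nonneg _) (by nlinarith)
    have hp2 : |f τ| * |g' τ| ≤ Mf * BD := mul_le_mul h3 h4 (abs_nonneg _) hMf0
    have hp3 : βi * |D τ| ≤ βi * (2 * (Mγ + ci * Mf)) :=
      mul_le_mul_of_nonneg_left h5 hβi.le
    linarith
  have hHint : IntervalIntegrable H volume t₀ t :=
    integrableOn_of_bound ht hHCm hHeq hHbound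
  -- FTC
  have hFTC : ∫ τ in t₀..t, H τ = F t - F t₀ :=
    integral_eq_sub_of_hasDeriv_right_of_le ht hFcont hFderiv hHint
  -- integrability of the main integrand
  set gmC : ℝ → ℝ := fun τ => γC τ * (gC τ - βi * sgnC τ) with hgmCdef
  have hgmCm : Measurable gmC :=
    hγCc.measurable.mul (hgCc.measurable.sub (measurable_const.mul hsgnCm))
  have hgmeq : ∀ᵐ τ ∂(volume.restrict (Set.Icc t₀ t)), gm τ = gmC τ := by
    filter_upwards [haeIcc] with τ hτ
    have e1 := hfCeq τ hτ.1
    have e2 := hγCeq τ hτ.1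
    have e3 := hgCeq τ hτ.1
    have e5 : sgnC τ = Real.sign (f τ) := by rw [hsgnCeq, e1]
    simp only [hgmdef, hgmCdef, e2, e3, e5]
  have hgmbound : ∀ τ ∈ Set.Icc t₀ t, |gm τ| ≤ Mγ * (Mg + βi) := by
    intro τ hτ
    have h2 := hMg τ hτ
    have hs : |g τ - βi * Real.sign (f τ)| ≤ Mg + βi := by
      calc |g τ - βi * Real.sign (f τ)| ≤ |g τ| + |βi * Real.sign (f τ)| := abs_sub _ _
        _ ≤ Mg + βi := by
            rw [abs_mul, abs_of_pos hβi]
            have := mul_le_mul_of_nonneg_left (abs_real_sign_le (f τ)) hβi.le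
            linarith
    calc |gm τ| = |γi τ| * |g τ - βi * Real.sign (f τ)| := abs_mul _ _
      _ ≤ Mγ * (Mg + βi) := mul_le_mul (hMγ τ hτ) hs (abs_nonneg _) hMγ0
  have hgmint : IntervalIntegrable gm volume t₀ t :=
    integrableOn_of_bound ht hgmCm hgmeq hgmbound
  refine ⟨hgmint, ?_⟩
  -- split the integral
  have hRint : IntervalIntegrable (fun τ => gm τ - H τ) volume t₀ t := hgmint.sub hHint
  have hsplit : (∫ τ in t₀..t, gm τ)
      = (∫ τ in t₀..t, H τ) + ∫ τ in t₀..t, (gm τ - H τ) := by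
    rw [← intervalIntegral.integral_add hHint hRint]
    congr 1
    funext τ
    ring
  -- exceptional set
  set A : Set ℝ := {x | t₀ ≤ x ∧ f x = 0 ∧ γi x - ci * f x ≠ 0} with hAdef
  have hAcount : A.Countable := by
    apply countable_of_forall_isolated
    intro x hx
    obtain ⟨hx1, hx2, hx3⟩ := hx
    filter_upwards [(hf x hx1).eventually_ne hx3] with z hz hzA
    exact hz (hzA.2.1.trans hx2.symm)
  have hRφ : (∫ τ in t₀..t, (gm τ - H τ)) = ∫ τ in t₀..t, -(φ τ) := by
    apply intervalIntegral.integral_congr_ae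
    have hAae : ∀ᵐ x : ℝ ∂volume, x ∉ A := by
      rw [MeasureTheory.ae_iff]
      simpa using hAcount.measure_zero volume
    filter_upwards [hAae] with x hxA hxI
    rw [Set.uIoc_of_le ht] at hxI
    have hx1 : t₀ ≤ x := hxI.1.le
    have hind : Set.indicator {σ | f σ = 0} (fun σ => |γi σ - ci * f σ|) x = 0 := by
      by_cases h0 : f x = 0
      · have hz : γi x - ci * f x = 0 := by
          by_contra hne
          exact hxA ⟨hx1, h0, hne⟩
        rw [Set.indicator_of_mem (by simpa using h0)]
        simp [hz]
      · rw [Set.indicator_of_notMem (by simpa using h0)]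
    have hsf : |f x| = f x * Real.sign (f x) := (mul_sign_eq_abs _).symm
    simp only [hgmdef, hHdef, hDdef, hφdef, hind]
    rw [hsf]
    ring
  -- nonnegativity of φ on the interval
  have hφnn : 0 ≤ ∫ τ in t₀..t, φ τ := by
    apply intervalIntegral.integral_nonneg ht
    intro x hx
    have habs := abs_nonneg (f x)
    have h2 := hgB x hx.1
    have h3 := hg'B x hx.1
    have h4 : -(|f x| * |g' x|) ≤ f x * g' x := by
      rw [← abs_mul]
      exact neg_abs_le _
    have h5 : f x * g x ≤ |f x| * |g x| := by
      rw [← abs_mul]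
      exact le_abs_self _
    have h6 := mul_le_mul_of_nonneg_left h2 habs
    have h7 := mul_le_mul_of_nonneg_left h3 habs
    have h8 := mul_le_mul_of_nonneg_left hkey habs
    simp only [hφdef]
    nlinarith [hci.le]
  -- final assembly
  have hQ : f t₀ * (βi * Real.sign (f t₀)) = βi * |f t₀| := by
    rw [← mul_sign_eq_abs]
    ring
  have hFt : 0 ≤ βi * |f t| - f t * g t := by
    have h2 : |g t| ≤ BN := hgB t ht
    have h5 : f t * g t ≤ |f t| * |g t| := by
      rw [← abs_mul]
      exact le_abs_self _
    nlinarith [abs_nonneg (f t), mul_le_mul_of_nonneg_left h2 (abs_nonneg (f t))]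
  have hInt : (∫ τ in t₀..t, gm τ) = (F t - F t₀) - ∫ τ in t₀..t, φ τ := by
    rw [hsplit, hFTC, hRφ, intervalIntegral.integral_neg]
    ring
  rw [hQ, hInt]
  have hFt' : F t = f t * g t - βi * |f t| := by simp [hFdef]
  have hFt₀ : F t₀ = f t₀ * g t₀ - βi * |f t₀| := by simp [hFdef]
  rw [hFt', hFt₀]
  linarith

end RiseAuxProof

/-- RISE auxiliary-function nonnegativity: with γ = ζ̇₁ + cζ₁ and
γ̇ = −k_sγ − β sgn(ζ₁) + N_c(t), if each β_i dominates
(max c / min c)·sup‖N_c‖₁ + sup‖Ṅ_c‖₁ / min c, then V₃ ≥ 0. -/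
theorem rise_auxiliary_nonneg {N : ℕ} [NeZero N] (t₀ : ℝ)
    (ζ₁ γ Nc Nc' : ℝ → Fin N → ℝ) (c ks β : Fin N → ℝ)
    (hc : ∀ i, 0 < c i) (hks : ∀ i, 0 < ks i) (hβpos : ∀ i, 0 < β i)
    (hζ : ∀ t, t₀ ≤ t → ∀ i,
      HasDerivAt (fun s => ζ₁ s i) (γ t i - c i * ζ₁ t i) t)
    (hγ : ∀ t, t₀ ≤ t → ∀ i,
      HasDerivAt (fun s => γ s i)
        (-(ks i * γ t i) - β i * Real.sign (ζ₁ t i) + Nc t i) t)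
    (hNc : ∀ t, t₀ ≤ t → ∀ i, HasDerivAt (fun s => Nc s i) (Nc' t i) t)
    (BN BD : ℝ)
    (hBN : ∀ t, t₀ ≤ t → ∑ i, |Nc t i| ≤ BN)
    (hBD : ∀ t, t₀ ≤ t → ∑ i, |Nc' t i| ≤ BD)
    (hβ : ∀ i,
      (univ.sup' univ_nonempty c / univ.inf' univ_nonempty c) * BN
        + BD / univ.inf' univ_nonempty c ≤ β i) :
    ∀ t, t₀ ≤ t →
      0 ≤ (∑ i, ζ₁ t₀ i * (β i * Real.sign (ζ₁ t₀ i))) - (∑ i, ζ₁ t₀ i * Nc t₀ i)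
          - ∫ τ in t₀..t, ∑ i, γ τ i * (Nc τ i - β i * Real.sign (ζ₁ τ i)) := by
  intro t ht
  set m := univ.inf' univ_nonempty c with hmdef
  set M := univ.sup' univ_nonempty c with hMdef
  have hm : 0 < m := by
    rw [hmdef, Finset.lt_inf'_iff]
    exact fun i _ => hc i
  have hciM : ∀ i, c i ≤ M := fun i => Finset.le_sup' c (mem_univ i)
  have hmci : ∀ i, m ≤ c i := fun i => Finset.inf'_le c (mem_univ i)
  have hBN0 : 0 ≤ BN :=
    le_trans (Finset.sum_nonneg fun j _ => abs_nonneg _) (hBN t₀ le_rfl)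
  have hBD0 : 0 ≤ BD :=
    le_trans (Finset.sum_nonneg fun j _ => abs_nonneg _) (hBD t₀ le_rfl)
  have hβBN : ∀ i, BN ≤ β i := by
    intro i
    have h1 := hβ i
    have h2 : (1:ℝ) ≤ M / m := (one_le_div hm).mpr (le_trans (hmci i) (hciM i))
    have h3 : 0 ≤ BD / m := div_nonneg hBD0 hm.le
    nlinarith
  have hkey : ∀ i, c i * BN + BD ≤ β i * c i := by
    intro i
    have h1 := hβ i
    have he : (M / m * BN + BD / m) * m = M * BN + BD := by
      field_simp
    have h2 : M * BN + BD ≤ β i * m := by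
      have := mul_le_mul_of_nonneg_right h1 hm.le
      rw [he] at this
      exact this
    have h3 : β i * m ≤ β i * c i := mul_le_mul_of_nonneg_left (hmci i) (hβpos i).le
    have h4 : c i * BN ≤ M * BN := mul_le_mul_of_nonneg_right (hciM i) hBN0
    linarith
  have hcomp : ∀ i : Fin N,
      IntervalIntegrable (fun τ => γ τ i * (Nc τ i - β i * Real.sign (ζ₁ τ i))) MeasureTheory.volume t₀ t ∧
      0 ≤ ζ₁ t₀ i * (β i * Real.sign (ζ₁ t₀ i)) - ζ₁ t₀ i * Nc t₀ i
          - ∫ τ in t₀..t, γ τ i * (Nc τ i - β i * Real.sign (ζ₁ τ i)) := by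
    intro i
    refine comp_aux t₀ t ht (fun τ => ζ₁ τ i) (fun τ => γ τ i) (fun τ => Nc τ i)
      (fun τ => Nc' τ i) (c i) (β i) BN BD (hc i) (hβpos i)
      (fun τ hτ => hζ τ hτ i) (fun τ hτ => (hγ τ hτ i).continuousAt)
      (fun τ hτ => hNc τ hτ i) ?_ ?_ (hβBN i) (hkey i)
    · intro τ hτ
      exact le_trans (Finset.single_le_sum (f := fun j => |Nc τ j|)
        (fun j _ => abs_nonneg _) (mem_univ i)) (hBN τ hτ)
    · intro τ hτ
      exact le_trans (Finset.single_le_sum (f := fun j => |Nc' τ j|)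
        (fun j _ => abs_nonneg _) (mem_univ i)) (hBD τ hτ)
  have hswap : (∫ τ in t₀..t, ∑ i, γ τ i * (Nc τ i - β i * Real.sign (ζ₁ τ i)))
      = ∑ i, ∫ τ in t₀..t, γ τ i * (Nc τ i - β i * Real.sign (ζ₁ τ i)) :=
    intervalIntegral.integral_finset_sum (fun i _ => (hcomp i).1)
  rw [hswap, ← Finset.sum_sub_distrib, ← Finset.sum_sub_distrib]
  exact Finset.sum_nonneg fun i _ => (hcomp i).2
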